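/- arXiv:1910.09816 — 2 statements merged into one kernel-verified Lean document; each statement's English description precedes it below -/
import Mathlib

section
/- Let (A,φ) be a PCA over Set. Then Asm(A,φ) is a regular category: it has finite limits, every morphism factors as a regular epimorphism followed by a monomorphism, and regular epimorphisms are stable under pullback. Moreover, the functors Γ: Asm(A,φ) → Set and ∇: Set → Asm(A,φ) preserve finite limits and regular epimorphisms. -/
open CategoryTheory

namespace PcaPaper

/-- A partial binary application on `A`. -/
abbrev PApp (A : Type) := A → A → Option A

variable {A B C : Type}

/-- Definedness of the application of inhabited subsets. -/
def SubDef (app : PApp A) (U V : Set A) : Prop :=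
  ∀ a ∈ U, ∀ b ∈ V, (app a b).isSome

/-- Application of subsets. -/
def SubApp (app : PApp A) (U V : Set A) : Set A :=
  {c | ∃ a ∈ U, ∃ b ∈ V, app a b = some c}

/-- Terms with `n` variables, built from variables by application. -/
inductive Term (n : ℕ) : Type
  | var : Fin n → Term n
  | op : Term n → Term n → Term n

/-- Evaluation of a term at a vector of elements, as a partial function. -/
def Term.eval (app : PApp A) : {n : ℕ} → Term n → (Fin n → A) → Option A
  | _, .var i, ρ => some (ρ i)
  | _, .op s t, ρ => (Term.eval app s ρ).bind fun x => (Term.eval app t ρ).bind fun y => app x y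

/-- Evaluation of a term at a vector of subsets. -/
def Term.subEval (app : PApp A) : {n : ℕ} → Term n → (Fin n → Set A) → Set A
  | _, .var i, ρ => ρ i
  | _, .op s t, ρ => SubApp app (Term.subEval app s ρ) (Term.subEval app t ρ)

/-- Definedness of the evaluation of a term at a vector of subsets. -/
def Term.subDef (app : PApp A) : {n : ℕ} → Term n → (Fin n → Set A) → Prop
  | _, .var _, _ => True
  | _, .op s t, ρ => Term.subDef app s ρ ∧ Term.subDef app t ρ ∧
      SubDef app (Term.subEval app s ρ) (Term.subEval app t ρ)

/-- `r · a 0 · … · a (k-1)`, associated to the left. -/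
def appVec (app : PApp A) (r : A) : (k : ℕ) → (Fin k → A) → Option A
  | 0, _ => some r
  | k + 1, a => (appVec app r k fun i => a i.castSucc).bind fun s => app s (a (Fin.last k))

/-- `U` realizes `λ x₀ … xₙ. t`. -/
def Realizes (app : PApp A) (U : Set A) {n : ℕ} (t : Term (n + 1)) : Prop :=
  ∀ r ∈ U, ∀ a : Fin (n + 1) → A,
    (appVec app r n fun i => a i.castSucc).isSome ∧
    ∀ b, Term.eval app t a = some b → appVec app r (n + 1) a = some b

/-- A filter of inhabited subsets on a partial applicative structure. -/
structure IsPcaFilter (app : PApp A) (φ : Set (Set A)) : Prop where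
  nonempty : ∀ U ∈ φ, U.Nonempty
  upward : ∀ U ∈ φ, ∀ V : Set A, U ⊆ V → V ∈ φ
  appClosed : ∀ U ∈ φ, ∀ V ∈ φ, SubDef app U V → SubApp app U V ∈ φ

/-- Combinatorial completeness of a set of subsets. -/
def CombComplete (app : PApp A) (G : Set (Set A)) : Prop :=
  ∀ (n : ℕ) (t : Term (n + 1)), ∃ U ∈ G, Realizes app U t

/-- The least filter containing `G`. -/
def genFilter (app : PApp A) (G : Set (Set A)) : Set (Set A) :=
  ⋂₀ {ψ | IsPcaFilter app ψ ∧ G ⊆ ψ}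

/-- A (relative) PCA over the base category `Set`: a nonempty set with a partial
binary application and a combinatorially complete filter of inhabited subsets. -/
structure PCA (A : Type) where
  app : PApp A
  nonemptyCarrier : Nonempty A
  filt : Set (Set A)
  isFilter : IsPcaFilter app filt
  complete : CombComplete app filt

/- ### Helper lemmas -/

lemma isSome_bind_left {α β : Type} {o : Option α} {f : α → Option β}
    (h : (o.bind f).isSome) : o.isSome := by
  cases o <;> simp_all

lemma appVec_two_pre (app : PApp A) (r u v x : A) :
    (appVec app r 2 fun i => (![u, v, x] : Fin 3 → A) i.castSucc)
      = (app r u).bind fun s => app s v := rfl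

lemma appVec_three_cons (app : PApp A) (r u v x : A) :
    appVec app r (2 + 1) ![u, v, x]
      = ((app r u).bind fun s => app s v).bind fun s => app s x := rfl

lemma eval_comp_term (app : PApp A) (u v x : A) :
    Term.eval app (Term.op (.var 1) (.op (.var 0) (.var 2))) ![u, v, x]
      = (app u x).bind fun y => app v y := by
  simp [Term.eval]

lemma eval_app2_term (app : PApp A) (u v x : A) :
    Term.eval app (Term.op (.op (.var 0) (.var 1)) (.var 2)) ![u, v, x]
      = (app u v).bind fun d => app d x := by
  simp [Term.eval]

lemma filt_nonempty (P : PCA A) : ∃ U, U ∈ P.filt := by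
  obtain ⟨U, hU, -⟩ := P.complete 0 (.var 0)
  exact ⟨U, hU⟩

lemma univ_mem_filt (P : PCA A) : (Set.univ : Set A) ∈ P.filt := by
  obtain ⟨U, hU⟩ := filt_nonempty P
  exact P.isFilter.upward U hU _ (Set.subset_univ U)

lemma exists_ireal (P : PCA A) :
    ∃ U ∈ P.filt, ∀ r ∈ U, ∀ a : A, P.app r a = some a := by
  obtain ⟨U, hU, hreal⟩ := P.complete 0 (.var 0)
  refine ⟨U, hU, fun r hr a => ?_⟩
  have h := (hreal r hr fun _ => a).2 a (by simp [Term.eval])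
  simpa [appVec] using h

lemma realizes3_chain (P : PCA A) {T : Set A} {t : Term (2 + 1)}
    (hreal : Realizes P.app T t) {r : A} (hr : r ∈ T) (u v : A) :
    ∃ s w, P.app r u = some s ∧ P.app s v = some w := by
  have h1 : ((P.app r u).bind fun s => P.app s v).isSome := by
    have h := (hreal r hr ![u, v, v]).1
    rwa [appVec_two_pre] at h
  cases hru : P.app r u with
  | none => rw [hru] at h1; simp at h1
  | some s =>
    rw [hru] at h1
    simp only [Option.bind_some] at h1
    obtain ⟨w, hw⟩ := Option.isSome_iff_exists.mp h1
    exact ⟨s, w, rfl, hw⟩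

lemma exists_tracker3 (P : PCA A) (t : Term (2 + 1)) {U V : Set A}
    (hU : U ∈ P.filt) (hV : V ∈ P.filt) :
    ∃ W ∈ P.filt, ∀ w ∈ W, ∃ u ∈ U, ∃ v ∈ V,
      ∀ x c : A, Term.eval P.app t ![u, v, x] = some c → P.app w x = some c := by
  obtain ⟨T, hT, hreal⟩ := P.complete 2 t
  have hdef1 : SubDef P.app T U := by
    intro r hr u _
    obtain ⟨s, w, hs, -⟩ := realizes3_chain P hreal hr u u
    simp [hs]
  have hTU := P.isFilter.appClosed T hT U hU hdef1
  have hdef2 : SubDef P.app (SubApp P.app T U) V := by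
    rintro s ⟨r, hr, u, hu, hru⟩ v _
    obtain ⟨s', w, hs', hw⟩ := realizes3_chain P hreal hr u v
    rw [hru] at hs'
    injection hs' with h
    subst h
    simp [hw]
  refine ⟨SubApp P.app (SubApp P.app T U) V,
    P.isFilter.appClosed _ hTU V hV hdef2, ?_⟩
  rintro w ⟨s, ⟨r, hr, u, hu, hru⟩, v, hv, hsv⟩
  refine ⟨u, hu, v, hv, fun x c hc => ?_⟩
  have h2 : appVec P.app r (2 + 1) ![u, v, x] = some c := (hreal r hr ![u, v, x]).2 c hc
  rw [appVec_three_cons, hru] at h2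
  simp only [Option.bind_some] at h2
  rw [hsv] at h2
  simpa using h2

/- ### Assemblies -/

/-- An assembly over a PCA `(A, φ)`. -/
structure Asm {A : Type} (P : PCA A) : Type 1 where
  carrier : Type
  E : carrier → A → Prop
  total : ∀ x, ∃ a, E x a

/-- `U` tracks the function `f` between (the carriers of) two assemblies. -/
def Tracks (P : PCA A) {X Y : Asm P} (U : Set A) (f : X.carrier → Y.carrier) : Prop :=
  ∀ x a r, X.E x a → r ∈ U → ∃ b, P.app r a = some b ∧ Y.E (f x) b

/-- The category of assemblies over a PCA. -/
instance asmCategory (P : PCA A) : Category (Asm P) where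
  Hom X Y := {f : X.carrier → Y.carrier // ∃ U ∈ P.filt, Tracks P U f}
  id X := ⟨fun x => x, by
    obtain ⟨U, hU, hI⟩ := exists_ireal P
    exact ⟨U, hU, fun x a r hx hr => ⟨a, hI r hr a, hx⟩⟩⟩
  comp {X Y Z} f g := ⟨fun x => g.1 (f.1 x), by
    obtain ⟨U, hU, hf⟩ := f.2
    obtain ⟨V, hV, hg⟩ := g.2
    obtain ⟨W, hW, hkey⟩ := exists_tracker3 P
      (Term.op (.var 1) (.op (.var 0) (.var 2))) hU hV
    refine ⟨W, hW, fun x a w hx hw => ?_⟩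
    obtain ⟨u, hu, v, hv, key⟩ := hkey w hw
    obtain ⟨b, hb, hYb⟩ := hf x a u hx hu
    obtain ⟨c, hc, hZc⟩ := hg (f.1 x) b v hYb hv
    refine ⟨c, key a c ?_, hZc⟩
    rw [eval_comp_term, hb]
    simpa using hc⟩
  id_comp f := Subtype.ext rfl
  comp_id f := Subtype.ext rfl
  assoc f g h := Subtype.ext rfl

/-- The global-sections-like functor `Γ : Asm(A,φ) ⥤ Set`. -/
def Gam (P : PCA A) : Asm P ⥤ Type where
  obj X := X.carrier
  map f := TypeCat.ofHom f.1
  map_id _ := rfl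
  map_comp _ _ := rfl

/-- The constant-object assembly `∇ Y`. -/
def nablaObj (P : PCA A) (Y : Type) : Asm P where
  carrier := Y
  E := fun _ _ => True
  total := fun _ => P.nonemptyCarrier.elim fun a => ⟨a, trivial⟩

/-- The functor `∇ : Set ⥤ Asm(A,φ)`. -/
def Nab (P : PCA A) : Type ⥤ Asm P where
  obj Y := nablaObj P Y
  map {Y Z} f := ⟨f, by
    obtain ⟨U, hU, hI⟩ := exists_ireal P
    exact ⟨U, hU, fun y a r _ hr => ⟨a, hI r hr a, trivial⟩⟩⟩
  map_id _ := Subtype.ext rfl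
  map_comp _ _ := Subtype.ext rfl

/- ### Applicative morphisms -/

/-- The image of a subset under a relation. -/
def relImage (f : A → B → Prop) (V : Set A) : Set B :=
  {b | ∃ a ∈ V, f a b}

/-- `U` tracks the relation `f` as an applicative (pre)morphism. -/
def Tracks₂ (appA : PApp A) (appB : PApp B) (U : Set B) (f : A → B → Prop) : Prop :=
  ∀ a a' c, appA a a' = some c → ∀ b b', f a b → f a' b' → ∀ r ∈ U,
    ∃ d e, appB r b = some d ∧ appB d b' = some e ∧ f c e

/-- `f ⊆ A × B` is an applicative morphism `(A,φ) → (B,ψ)`. -/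
structure IsAppMor (appA : PApp A) (φ : Set (Set A)) (appB : PApp B) (ψ : Set (Set B))
    (f : A → B → Prop) : Prop where
  total : ∀ a, ∃ b, f a b
  tracked : ∃ U ∈ ψ, Tracks₂ appA appB U f
  image : ∀ V ∈ φ, relImage f V ∈ ψ

/-- The preorder `f ≤ f'` on relations `A × B`, relative to `(B,ψ)`. -/
def RelLe (appB : PApp B) (ψ : Set (Set B)) (f f' : A → B → Prop) : Prop :=
  ∃ U ∈ ψ, ∀ a b, f a b → ∀ r ∈ U, ∃ c, appB r b = some c ∧ f' a c

/-- Relational composition: `(RelComp g f) a c ↔ ∃ b, f a b ∧ g b c`. -/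
def RelComp (g : B → C → Prop) (f : A → B → Prop) : A → C → Prop :=
  fun a c => ∃ b, f a b ∧ g b c

/-- The diagonal (identity) relation `δ_A`. -/
def relId (A : Type) : A → A → Prop := fun a b => a = b

/- ### The functor Asm(f) induced by an applicative morphism -/

/-- The action of an applicative morphism on an assembly. -/
def asmObj (P : PCA A) (Q : PCA B) (f : A → B → Prop) (htot : ∀ a, ∃ b, f a b)
    (X : Asm P) : Asm Q where
  carrier := X.carrier
  E := fun x b => ∃ a, X.E x a ∧ f a b
  total := fun x => by
    obtain ⟨a, ha⟩ := X.total x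
    obtain ⟨b, hb⟩ := htot a
    exact ⟨b, a, ha, hb⟩

lemma tracks_asmMap {P : PCA A} {Q : PCA B} {f : A → B → Prop}
    (hf : IsAppMor P.app P.filt Q.app Q.filt f) {X Y : Asm P}
    (g : X.carrier → Y.carrier) (hg : ∃ U ∈ P.filt, Tracks P U g) :
    ∃ W ∈ Q.filt,
      Tracks Q (X := asmObj P Q f hf.total X) (Y := asmObj P Q f hf.total Y) W g := by
  obtain ⟨U, hU, hgU⟩ := hg
  obtain ⟨T, hT, hfT⟩ := hf.tracked
  have hfU : relImage f U ∈ Q.filt := hf.image U hU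
  obtain ⟨W, hW, hkey⟩ := exists_tracker3 Q
    (Term.op (.op (.var 0) (.var 1)) (.var 2)) hT hfU
  refine ⟨W, hW, ?_⟩
  rintro x b w ⟨a, hxa, hab⟩ hw
  obtain ⟨v, hv, y, hy, key⟩ := hkey w hw
  obtain ⟨u, hu, huy⟩ := hy
  obtain ⟨a', ha', hEa'⟩ := hgU x a u hxa hu
  obtain ⟨d, e, hd, he, hfe⟩ := hfT u a a' ha' y b huy hab v hv
  refine ⟨e, key b e ?_, a', hEa', hfe⟩
  rw [eval_app2_term, hd]
  simpa using he

/-- The functor `Asm(f) : Asm(A,φ) ⥤ Asm(B,ψ)` induced by an applicative morphism. -/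
def asmFunctor {P : PCA A} {Q : PCA B} {f : A → B → Prop}
    (hf : IsAppMor P.app P.filt Q.app Q.filt f) : Asm P ⥤ Asm Q where
  obj X := asmObj P Q f hf.total X
  map {X Y} g := ⟨g.1, tracks_asmMap hf g.1 g.2⟩
  map_id _ := Subtype.ext rfl
  map_comp _ _ := Subtype.ext rfl
/- ### Products of PASs -/

/-- Coordinatewise partial application on `A × B`. -/
def prodApp (appA : PApp A) (appB : PApp B) : PApp (A × B) := fun p q =>
  (appA p.1 q.1).bind fun x => (appB p.2 q.2).bind fun y => some (x, y)

/-- The set `φ × ψ` of rectangles `U ×ˢ V` with `U ∈ φ` and `V ∈ ψ`. -/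
def prodFiltSet (φ : Set (Set A)) (ψ : Set (Set B)) : Set (Set (A × B)) :=
  {W | ∃ U ∈ φ, ∃ V ∈ ψ, W = U ×ˢ V}

/-- The filter `⟨φ × ψ⟩` of the pseudocoproduct of two PCAs. -/
def prodFilt (P : PCA A) (Q : PCA B) : Set (Set (A × B)) :=
  genFilter (prodApp P.app Q.app) (prodFiltSet P.filt Q.filt)

/- ### Quasi-surjectivity and computational density -/

/-- A quasi-surjective applicative morphism. -/
def QuasiSurjective (P : PCA A) (Q : PCA B) (f : A → B → Prop) : Prop :=
  ∃ N ∈ Q.filt, ∀ U ∈ Q.filt, ∃ V ∈ P.filt,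
    ∀ n ∈ N, ∀ b ∈ relImage f V, ∃ c, Q.app n b = some c ∧ c ∈ U

/-- A computationally dense applicative morphism. -/
def CompDense (P : PCA A) (Q : PCA B) (f : A → B → Prop) : Prop :=
  ∃ M ∈ Q.filt, ∀ U ∈ Q.filt, ∃ V ∈ P.filt,
    (∀ r ∈ V, ∀ a : A, (P.app r a).isSome) ∧
    (∀ r ∈ V, ∀ a a', P.app r a = some a' →
      (∀ u ∈ U, ∀ b, f a b → (Q.app u b).isSome) →
      ∀ m ∈ M, ∀ b', f a' b' →
        ∃ c, Q.app m b' = some c ∧ ∃ u ∈ U, ∃ b'', f a b'' ∧ Q.app u b'' = some c)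

/- ### Slicing: fiberwise filters over an assembly -/

/-- Fiberwise definedness of the application of two subsets of `I × A`. -/
def fibSubDef (app : PApp A) {I : Type} (U V : Set (I × A)) : Prop :=
  ∀ i r s, (i, r) ∈ U → (i, s) ∈ V → (app r s).isSome

/-- Fiberwise application of two subsets of `I × A`. -/
def fibSubApp (app : PApp A) {I : Type} (U V : Set (I × A)) : Set (I × A) :=
  {p | ∃ r s, (p.1, r) ∈ U ∧ (p.1, s) ∈ V ∧ app r s = some p.2}

/-- A fiberwise filter over `I`. -/
structure IsFibFilter (app : PApp A) (I : Type) (Ψ : Set (Set (I × A))) : Prop where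
  inhab : ∀ U ∈ Ψ, ∀ i : I, ∃ a, (i, a) ∈ U
  upward : ∀ U ∈ Ψ, ∀ V : Set (I × A), U ⊆ V → V ∈ Ψ
  appClosed : ∀ U ∈ Ψ, ∀ V ∈ Ψ, fibSubDef app U V → fibSubApp app U V ∈ Ψ

/-- The filter `φ_I` of the slice PCA over an assembly `I`: the least fiberwise filter
containing `E_I` and all sets `|I| × V` for `V ∈ φ`. -/
def sliceFilt (P : PCA A) (I : Asm P) : Set (Set (I.carrier × A)) :=
  ⋂₀ {Ψ | IsFibFilter P.app I.carrier Ψ ∧ {p : I.carrier × A | I.E p.1 p.2} ∈ Ψ ∧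
      ∀ V ∈ P.filt, {p : I.carrier × A | p.2 ∈ V} ∈ Ψ}

lemma sliceFilt_upward {P : PCA A} {I : Asm P} {U V : Set (I.carrier × A)}
    (hU : U ∈ sliceFilt P I) (hUV : U ⊆ V) : V ∈ sliceFilt P I := by
  rw [sliceFilt, Set.mem_sInter] at hU ⊢
  intro Ψ hΨ
  exact hΨ.1.upward U (hU Ψ hΨ) V hUV

lemma sliceFilt_appClosed {P : PCA A} {I : Asm P} {U V : Set (I.carrier × A)}
    (hU : U ∈ sliceFilt P I) (hV : V ∈ sliceFilt P I) (hdef : fibSubDef P.app U V) :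
    fibSubApp P.app U V ∈ sliceFilt P I := by
  rw [sliceFilt, Set.mem_sInter] at hU hV ⊢
  intro Ψ hΨ
  exact hΨ.1.appClosed U (hU Ψ hΨ) V (hV Ψ hΨ) hdef

lemma base_mem_sliceFilt {P : PCA A} {I : Asm P} {V : Set A} (hV : V ∈ P.filt) :
    {p : I.carrier × A | p.2 ∈ V} ∈ sliceFilt P I := by
  rw [sliceFilt, Set.mem_sInter]
  intro Ψ hΨ
  exact hΨ.2.2 V hV

lemma EI_mem_sliceFilt (P : PCA A) (I : Asm P) :
    {p : I.carrier × A | I.E p.1 p.2} ∈ sliceFilt P I := by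
  rw [sliceFilt, Set.mem_sInter]
  intro Ψ hΨ
  exact hΨ.2.1

lemma exists_fib_tracker3 (P : PCA A) (I : Asm P) (t : Term (2 + 1))
    {U V : Set (I.carrier × A)} (hU : U ∈ sliceFilt P I) (hV : V ∈ sliceFilt P I) :
    ∃ W ∈ sliceFilt P I, ∀ i w, (i, w) ∈ W → ∃ u v, (i, u) ∈ U ∧ (i, v) ∈ V ∧
      ∀ x c : A, Term.eval P.app t ![u, v, x] = some c → P.app w x = some c := by
  obtain ⟨T, hT, hreal⟩ := P.complete 2 t
  have hT' : {p : I.carrier × A | p.2 ∈ T} ∈ sliceFilt P I := base_mem_sliceFilt hT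
  have hdef1 : fibSubDef P.app {p : I.carrier × A | p.2 ∈ T} U := by
    intro i r s hr _
    obtain ⟨s', w', h1, -⟩ := realizes3_chain P hreal hr s s
    simp [h1]
  have h1mem := sliceFilt_appClosed hT' hU hdef1
  have hdef2 : fibSubDef P.app (fibSubApp P.app {p : I.carrier × A | p.2 ∈ T} U) V := by
    rintro i s v ⟨r, u, hr, hu, hru⟩ _
    obtain ⟨s', w', hs', hw'⟩ := realizes3_chain P hreal hr u v
    rw [hru] at hs'
    injection hs' with h
    subst h
    simp [hw']
  refine ⟨_, sliceFilt_appClosed h1mem hV hdef2, ?_⟩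
  rintro i w ⟨s, v, ⟨r, u, hr, hu, hru⟩, hv, hsv⟩
  refine ⟨u, v, hu, hv, fun x c hc => ?_⟩
  have h2 : appVec P.app r (2 + 1) ![u, v, x] = some c := (hreal r hr ![u, v, x]).2 c hc
  rw [appVec_three_cons, hru] at h2
  simp only [Option.bind_some] at h2
  rw [hsv] at h2
  simpa using h2

/- ### The category of assemblies over the slice PCA `(A,φ)/I` -/

/-- Assemblies over the slice PCA `(A,φ)/I`. -/
structure SliceAsm (P : PCA A) (I : Asm P) : Type 1 where
  carrier : Type
  k : carrier → I.carrier
  E : carrier → A → Prop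
  total : ∀ x, ∃ a, E x a

/-- Fiberwise tracking for morphisms of assemblies over `(A,φ)/I`. -/
def SliceTracks (P : PCA A) (I : Asm P) {X Y : SliceAsm P I} (U : Set (I.carrier × A))
    (f : X.carrier → Y.carrier) : Prop :=
  ∀ x a r, X.E x a → (X.k x, r) ∈ U → ∃ b, P.app r a = some b ∧ Y.E (f x) b

instance sliceAsmCategory (P : PCA A) (I : Asm P) : Category (SliceAsm P I) where
  Hom X Y := {f : X.carrier → Y.carrier //
    (∀ x, Y.k (f x) = X.k x) ∧ ∃ U ∈ sliceFilt P I, SliceTracks P I U f}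
  id X := ⟨fun x => x, fun _ => rfl, by
    obtain ⟨U, hU, hI⟩ := exists_ireal P
    exact ⟨{p | p.2 ∈ U}, base_mem_sliceFilt hU,
      fun x a r hx hr => ⟨a, hI r hr a, hx⟩⟩⟩
  comp {X Y Z} f g := ⟨fun x => g.1 (f.1 x), fun x => (g.2.1 (f.1 x)).trans (f.2.1 x), by
    obtain ⟨U, hU, hf⟩ := f.2.2
    obtain ⟨V, hV, hg⟩ := g.2.2
    obtain ⟨W, hW, hkey⟩ := exists_fib_tracker3 P I
      (Term.op (.var 1) (.op (.var 0) (.var 2))) hU hV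
    refine ⟨W, hW, fun x a w hx hw => ?_⟩
    obtain ⟨u, v, hu, hv, key⟩ := hkey (X.k x) w hw
    obtain ⟨b, hb, hYb⟩ := hf x a u hx hu
    have hv' : (Y.k (f.1 x), v) ∈ V := by rw [f.2.1 x]; exact hv
    obtain ⟨c, hc, hZc⟩ := hg (f.1 x) b v hYb hv'
    refine ⟨c, key a c ?_, hZc⟩
    rw [eval_comp_term, hb]
    simpa using hc⟩
  id_comp f := Subtype.ext rfl
  comp_id f := Subtype.ext rfl
  assoc f g h := Subtype.ext rfl

/- ### Families of assemblies (products of PCAs) -/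

/-- The category of families of assemblies over a family of PCAs, with uniformly
tracked families of morphisms; this is the category of assemblies over the product
PCA of the family, taken over the product of the base categories. -/
structure FamAsm {I : Type} {A : I → Type} (P : ∀ i, PCA (A i)) : Type 1 where
  obj : ∀ i, Asm (P i)

instance famAsmCategory {I : Type} {A : I → Type} (P : ∀ i, PCA (A i)) :
    Category (FamAsm P) where
  Hom X Y := {f : ∀ i, (X.obj i).carrier → (Y.obj i).carrier //
    ∃ U : ∀ i, Set (A i), (∀ i, U i ∈ (P i).filt) ∧ ∀ i, Tracks (P i) (U i) (f i)}
  id X := ⟨fun i x => x, by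
    choose U hU using fun i => exists_ireal (P i)
    exact ⟨U, fun i => (hU i).1, fun i x a r hx hr => ⟨a, (hU i).2 r hr a, hx⟩⟩⟩
  comp {X Y Z} f g := ⟨fun i x => g.1 i (f.1 i x), by
    obtain ⟨U, hU, hf⟩ := f.2
    obtain ⟨V, hV, hg⟩ := g.2
    choose W hW using fun i => exists_tracker3 (P i)
      (Term.op (.var 1) (.op (.var 0) (.var 2))) (hU i) (hV i)
    refine ⟨W, fun i => (hW i).1, fun i x a w hx hw => ?_⟩
    obtain ⟨u, hu, v, hv, key⟩ := (hW i).2 w hw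
    obtain ⟨b, hb, hYb⟩ := hf i x a u hx hu
    obtain ⟨c, hc, hZc⟩ := hg i (f.1 i x) b v hYb hv
    refine ⟨c, key a c ?_, hZc⟩
    rw [eval_comp_term, hb]
    simpa using hc⟩
  id_comp f := Subtype.ext rfl
  comp_id f := Subtype.ext rfl
  assoc f g h := Subtype.ext rfl

/- ### General tracker machinery -/

section Machinery

variable {A : Type}

lemma appVec_congr (app : PApp A) (r : A) (k : ℕ) {f g : Fin k → A}
    (h : ∀ i : Fin k, f i = g i) : appVec app r k f = appVec app r k g := by
  rw [funext h]

lemma appVec_nat_succ (app : PApp A) (r : A) (k : ℕ) (v : ℕ → A) :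
    appVec app r (k + 1) (fun i : Fin (k + 1) => v i) =
      (appVec app r k fun i : Fin k => v i).bind fun s => app s (v k) := rfl

lemma isSome_nat_succ {app : PApp A} {r : A} {k : ℕ} {v : ℕ → A}
    (h : (appVec app r (k + 1) fun i : Fin (k + 1) => v i).isSome) :
    (appVec app r k fun i : Fin k => v i).isSome := by
  rw [appVec_nat_succ] at h
  exact isSome_bind_left h

lemma appVec_nat_down (app : PApp A) (r : A) (v : ℕ → A) :
    ∀ n k, k ≤ n → (appVec app r n fun i : Fin n => v i).isSome →
      (appVec app r k fun i : Fin k => v i).isSome := by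
  intro n
  induction n with
  | zero => intro k hk h; obtain rfl : k = 0 := Nat.le_zero.mp hk; exact h
  | succ n ih =>
    intro k hk h
    rcases Nat.eq_or_lt_of_le hk with rfl | hlt
    · exact h
    · exact ih k (Nat.lt_succ_iff.mp hlt) (isSome_nat_succ h)

/-- Iterated application of a set to a sequence of sets. -/
def iterApp (app : PApp A) (T : Set A) (U : ℕ → Set A) : ℕ → Set A
  | 0 => T
  | k + 1 => SubApp app (iterApp app T U k) (U k)

lemma mem_iterApp {app : PApp A} {T : Set A} {U : ℕ → Set A} (hA : Nonempty A) :
    ∀ k w, w ∈ iterApp app T U k ↔ ∃ r ∈ T, ∃ u : ℕ → A,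
      (∀ i, i < k → u i ∈ U i) ∧ appVec app r k (fun i : Fin k => u i) = some w := by
  intro k
  induction k with
  | zero =>
    intro w
    constructor
    · intro hw
      exact ⟨w, hw, fun _ => hA.some, fun i h => absurd h (Nat.not_lt_zero i), rfl⟩
    · rintro ⟨r, hr, u, -, h⟩
      simpa [appVec] using (Option.some_inj.mp h) ▸ hr
  | succ k ih =>
    intro w
    constructor
    · rintro ⟨s, hs, b, hb, hsb⟩
      obtain ⟨r, hr, u, hu, hvec⟩ := (ih s).mp hs
      refine ⟨r, hr, fun i => if i = k then b else u i, ?_, ?_⟩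
      · intro i hi
        by_cases h : i = k
        · subst h; simpa using hb
        · simpa [h] using hu i (by omega)
      · show ((appVec app r k fun i : Fin k =>
            if (i : ℕ) = k then b else u i).bind
            fun s => app s (if k = k then b else u k)) = some w
        rw [show (appVec app r k fun i : Fin k => if (i : ℕ) = k then b else u i)
            = appVec app r k fun i : Fin k => u i from
          appVec_congr app r k (fun i => by simp [Nat.ne_of_lt i.isLt]), hvec, if_pos rfl]
        simpa using hsb
    · rintro ⟨r, hr, u, hu, hvec⟩
      replace hvec : ((appVec app r k fun i : Fin k => u i).bind
          fun s => app s (u k)) = some w := hvec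
      cases hsk : (appVec app r k fun i : Fin k => u i) with
      | none => rw [hsk] at hvec; simp at hvec
      | some s =>
        rw [hsk] at hvec
        refine ⟨s, (ih s).mpr ⟨r, hr, u, fun i hi => hu i (by omega), hsk⟩,
          u k, hu k (Nat.lt_succ_self k), by simpa using hvec⟩

variable (P : PCA A)

lemma realizes_prefix_isSome {n : ℕ} {t : Term (n + 1)} {T : Set A}
    (hreal : Realizes P.app T t) {r : A} (hr : r ∈ T) (v : ℕ → A) :
    (appVec P.app r n fun i : Fin n => v i).isSome := by
  have h := (hreal r hr fun i : Fin (n + 1) => v i).1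
  exact h

lemma iterApp_mem_filt {n : ℕ} {t : Term (n + 1)} {T : Set A}
    (hT : T ∈ P.filt) (hreal : Realizes P.app T t) {U : ℕ → Set A}
    (hU : ∀ i, i < n → U i ∈ P.filt) :
    ∀ k, k ≤ n → iterApp P.app T U k ∈ P.filt := by
  have hA : Nonempty A := P.nonemptyCarrier
  intro k
  induction k with
  | zero => intro _; exact hT
  | succ k ih =>
    intro hk
    refine P.isFilter.appClosed _ (ih (by omega)) _ (hU k (by omega)) ?_
    intro s hs b hb
    obtain ⟨r, hr, u, hu, hvec⟩ := (mem_iterApp hA k s).mp hs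
    set v : ℕ → A := fun i => if i < k then u i else b with hv
    have h1 : ((appVec P.app r k fun i : Fin k => v i).bind
        fun s => P.app s (v k)).isSome := by
      have := appVec_nat_down P.app r v n (k + 1) hk (realizes_prefix_isSome P hreal hr v)
      rw [appVec_nat_succ] at this
      exact this
    have h2 : (appVec P.app r k fun i : Fin k => v i) = some s := by
      rw [appVec_congr P.app r k (g := fun i : Fin k => u i)
        (fun i => by simp [hv, i.isLt])]
      exact hvec
    rw [h2] at h1
    simpa [hv] using h1

/-- The general tracker lemma: for any term `t` in `n + 1` variables and filter sets
`U 0, …, U (n-1)`, there is a filter set `W` of elements tracking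
`x ↦ t(u₀, …, u_{n-1}, x)` for suitable `uᵢ ∈ U i`. -/
lemma exists_trackerN (n : ℕ) (t : Term (n + 1)) (U : ℕ → Set A)
    (hU : ∀ i, i < n → U i ∈ P.filt) :
    ∃ W ∈ P.filt, ∀ w ∈ W, ∃ u : ℕ → A, (∀ i, i < n → u i ∈ U i) ∧
      ∀ x c, Term.eval P.app t
          (fun i : Fin (n + 1) => if (i : ℕ) < n then u i else x) = some c →
        P.app w x = some c := by
  have hA : Nonempty A := P.nonemptyCarrier
  obtain ⟨T, hT, hreal⟩ := P.complete n t
  refine ⟨iterApp P.app T U n, iterApp_mem_filt P hT hreal hU n le_rfl, ?_⟩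
  intro w hw
  obtain ⟨r, hr, u, hu, hvec⟩ := (mem_iterApp hA n w).mp hw
  refine ⟨u, hu, ?_⟩
  intro x c heval
  set a : Fin (n + 1) → A := fun i => if (i : ℕ) < n then u i else x with ha
  have h2 : appVec P.app r (n + 1) a = some c := (hreal r hr a).2 c heval
  have h3 : appVec P.app r (n + 1) a =
      (appVec P.app r n fun i : Fin n => u i).bind fun s => P.app s x := by
    show ((appVec P.app r n fun i : Fin n => a i.castSucc).bind
        fun s => P.app s (a (Fin.last n))) = _
    rw [appVec_congr P.app r n (f := fun i : Fin n => a i.castSucc)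
      (g := fun i : Fin n => u i) (fun i => by simp [ha, i.isLt])]
    simp [ha]
  rw [h3, hvec] at h2
  simpa using h2

end Machinery

/- ### Pairing -/

section Pairing

variable {A : Type}

/-- Binary application `p · a · b`. -/
def pc2 (app : PApp A) (p a b : A) : Option A :=
  (app p a).bind fun s => app s b

lemma appVec_two (app : PApp A) (p a b : A) :
    appVec app p 2 ![a, b] = pc2 app p a b := rfl

/-- The pairing term `λ x y z. z x y`. -/
def pairTerm : Term 3 := Term.op (.op (.var 2) (.var 0)) (.var 1)

lemma eval_pairTerm (app : PApp A) (a b z : A) :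
    Term.eval app pairTerm ![a, b, z] = pc2 app z a b := by
  simp [pairTerm, Term.eval, pc2]

variable (P : PCA A)

/-- A chosen filter set realizing the pairing term. -/
noncomputable def pairSet : Set A := (P.complete 2 pairTerm).choose

lemma pairSet_mem : pairSet P ∈ P.filt := (P.complete 2 pairTerm).choose_spec.1

lemma pairSet_real : Realizes P.app (pairSet P) pairTerm :=
  (P.complete 2 pairTerm).choose_spec.2

/-- `c` is a code for the pair `(a, b)`. -/
def pairCode (a b c : A) : Prop := ∃ p ∈ pairSet P, pc2 P.app p a b = some c

lemma pc2_pair_isSome {p : A} (hp : p ∈ pairSet P) (a b : A) :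
    (pc2 P.app p a b).isSome := by
  have h := (pairSet_real P p hp ![a, b, b]).1
  have h2 : (appVec P.app p 2 fun i : Fin 2 => (![a, b, b] : Fin 3 → A) i.castSucc)
      = pc2 P.app p a b := by
    rw [show (fun i : Fin 2 => (![a, b, b] : Fin 3 → A) i.castSucc) = ![a, b] from
      funext fun i => by fin_cases i <;> rfl]
    rfl
  rwa [h2] at h
lemma pairCode_total (a b : A) : ∃ c, pairCode P a b c := by
  obtain ⟨p, hp⟩ := P.isFilter.nonempty _ (pairSet_mem P)
  obtain ⟨c, hc⟩ := Option.isSome_iff_exists.mp (pc2_pair_isSome P hp a b)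
  exact ⟨c, p, hp, hc⟩

lemma pairCode_unpack {a b c z d : A} (h : pairCode P a b c)
    (hz : pc2 P.app z a b = some d) : P.app c z = some d := by
  obtain ⟨p, hp, hc⟩ := h
  have h2 := (pairSet_real P p hp ![a, b, z]).2 d (by rw [eval_pairTerm]; exact hz)
  rw [show appVec P.app p (2 + 1) ![a, b, z]
      = (pc2 P.app p a b).bind fun s => P.app s z from rfl, hc] at h2
  simpa using h2

/-- A chosen filter set realizing `λ x y. x`. -/
noncomputable def kSet : Set A := (P.complete 1 (Term.var 0)).choose

lemma kSet_mem : kSet P ∈ P.filt := (P.complete 1 (Term.var 0)).choose_spec.1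

lemma kSet_spec {k : A} (hk : k ∈ kSet P) (a b : A) : pc2 P.app k a b = some a := by
  have h := ((P.complete 1 (Term.var 0)).choose_spec.2 k hk ![a, b]).2 a
    (by simp [Term.eval])
  rw [show appVec P.app k (1 + 1) ![a, b] = pc2 P.app k a b from rfl] at h
  exact h

/-- A chosen filter set realizing `λ x y. y`. -/
noncomputable def kbarSet : Set A := (P.complete 1 (Term.var 1)).choose

lemma kbarSet_mem : kbarSet P ∈ P.filt := (P.complete 1 (Term.var 1)).choose_spec.1

lemma kbarSet_spec {k : A} (hk : k ∈ kbarSet P) (a b : A) : pc2 P.app k a b = some b := by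
  have h := ((P.complete 1 (Term.var 1)).choose_spec.2 k hk ![a, b]).2 b
    (by simp [Term.eval])
  rw [show appVec P.app k (1 + 1) ![a, b] = pc2 P.app k a b from rfl] at h
  exact h

/-- A filter set of elements extracting the first component of a pair code. -/
lemma exists_fst : ∃ F ∈ P.filt, ∀ f ∈ F, ∀ a b c : A,
    pairCode P a b c → P.app f c = some a := by
  obtain ⟨W, hW, hkey⟩ := exists_trackerN P 1 (Term.op (.var 1) (.var 0))
    (fun _ => kSet P) (fun _ _ => kSet_mem P)
  refine ⟨W, hW, fun f hf a b c hc => ?_⟩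
  obtain ⟨u, hu, key⟩ := hkey f hf
  refine key c a ?_
  have h0 : u 0 ∈ kSet P := hu 0 (by omega)
  have : Term.eval P.app (Term.op (.var 1) (.var 0))
      (fun i : Fin 2 => if (i : ℕ) < 1 then u i else c) = P.app c (u 0) := by
    simp [Term.eval]
  rw [this]
  exact pairCode_unpack P hc (kSet_spec P h0 a b)

/-- A filter set of elements extracting the second component of a pair code. -/
lemma exists_snd : ∃ F ∈ P.filt, ∀ f ∈ F, ∀ a b c : A,
    pairCode P a b c → P.app f c = some b := by
  obtain ⟨W, hW, hkey⟩ := exists_trackerN P 1 (Term.op (.var 1) (.var 0))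
    (fun _ => kbarSet P) (fun _ _ => kbarSet_mem P)
  refine ⟨W, hW, fun f hf a b c hc => ?_⟩
  obtain ⟨u, hu, key⟩ := hkey f hf
  refine key c b ?_
  have h0 : u 0 ∈ kbarSet P := hu 0 (by omega)
  have : Term.eval P.app (Term.op (.var 1) (.var 0))
      (fun i : Fin 2 => if (i : ℕ) < 1 then u i else c) = P.app c (u 0) := by
    simp [Term.eval]
  rw [this]
  exact pairCode_unpack P hc (kbarSet_spec P h0 a b)

end Pairing

/- ### Limits of assemblies -/

section Assemblies

open Limits

variable {A : Type} {P : PCA A}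

lemma asm_hom_ext {X Y : Asm P} {f g : X ⟶ Y} (h : ∀ x, f.1 x = g.1 x) : f = g :=
  Subtype.ext (funext h)

lemma asm_hom_congr {X Y : Asm P} {f g : X ⟶ Y} (h : f = g) (x : X.carrier) :
    f.1 x = g.1 x := congrFun (congrArg Subtype.val h) x

/-- A function which maps realizers to realizers is a morphism of assemblies. -/
def idTracked {X Y : Asm P} (f : X.carrier → Y.carrier)
    (hf : ∀ x a, X.E x a → Y.E (f x) a) : X ⟶ Y :=
  ⟨f, by
    obtain ⟨U, hU, hI⟩ := exists_ireal P
    exact ⟨U, hU, fun x a r hx hr => ⟨a, hI r hr a, hf x a hx⟩⟩⟩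

/-- The terminal assembly. -/
def asmTerminal (P : PCA A) : Asm P :=
  ⟨PUnit, fun _ _ => True, fun _ => P.nonemptyCarrier.elim fun a => ⟨a, trivial⟩⟩

def asmTerminalIsTerminal (P : PCA A) : IsTerminal (asmTerminal P) :=
  IsTerminal.ofUniqueHom (fun _ => idTracked (fun _ => PUnit.unit) (fun _ _ _ => trivial))
    (fun _ _ => asm_hom_ext fun _ => rfl)

/-- The pullback assembly. -/
def asmPb {X Y Z : Asm P} (f : X ⟶ Z) (g : Y ⟶ Z) : Asm P where
  carrier := {p : X.carrier × Y.carrier // f.1 p.1 = g.1 p.2}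
  E := fun p c => ∃ a b, X.E p.1.1 a ∧ Y.E p.1.2 b ∧ pairCode P a b c
  total := fun p => by
    obtain ⟨a, ha⟩ := X.total p.1.1
    obtain ⟨b, hb⟩ := Y.total p.1.2
    obtain ⟨c, hc⟩ := pairCode_total P a b
    exact ⟨c, a, b, ha, hb, hc⟩

def asmPbFst {X Y Z : Asm P} (f : X ⟶ Z) (g : Y ⟶ Z) : asmPb f g ⟶ X :=
  ⟨fun p => p.1.1, by
    obtain ⟨F, hF, hfst⟩ := exists_fst P
    refine ⟨F, hF, fun p c r hp hr => ?_⟩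
    obtain ⟨a, b, ha, hb, hcode⟩ := hp
    exact ⟨a, hfst r hr a b c hcode, ha⟩⟩

def asmPbSnd {X Y Z : Asm P} (f : X ⟶ Z) (g : Y ⟶ Z) : asmPb f g ⟶ Y :=
  ⟨fun p => p.1.2, by
    obtain ⟨F, hF, hsnd⟩ := exists_snd P
    refine ⟨F, hF, fun p c r hp hr => ?_⟩
    obtain ⟨a, b, ha, hb, hcode⟩ := hp
    exact ⟨b, hsnd r hr a b c hcode, hb⟩⟩

/-- The term `λ p u v a. p (u a) (v a)`. -/
def liftTerm : Term 4 := Term.op (.op (.var 0) (.op (.var 1) (.var 3))) (.op (.var 2) (.var 3))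

lemma eval_liftTerm (app : PApp A) (p u v a a' b' : A)
    (h1 : app u a = some a') (h2 : app v a = some b') :
    Term.eval app liftTerm ![p, u, v, a] = pc2 app p a' b' := by
  simp [liftTerm, Term.eval, h1, h2, pc2]

def asmPbLift {X Y Z Q : Asm P} (f : X ⟶ Z) (g : Y ⟶ Z) (s : Q ⟶ X) (t : Q ⟶ Y)
    (hst : ∀ q, f.1 (s.1 q) = g.1 (t.1 q)) : Q ⟶ asmPb f g :=
  ⟨fun q => ⟨(s.1 q, t.1 q), hst q⟩, by
    obtain ⟨Us, hUs, hs⟩ := s.2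
    obtain ⟨Ut, hUt, ht⟩ := t.2
    obtain ⟨W, hW, hkey⟩ := exists_trackerN P 3 liftTerm
      (fun i => if i = 0 then pairSet P else if i = 1 then Us else Ut)
      (by intro i hi; interval_cases i <;> simp [pairSet_mem P, hUs, hUt])
    refine ⟨W, hW, fun q a w hq hw => ?_⟩
    obtain ⟨u, hu, key⟩ := hkey w hw
    have hu0 : u 0 ∈ pairSet P := by simpa using hu 0 (by omega)
    have hu1 : u 1 ∈ Us := by simpa using hu 1 (by omega)
    have hu2 : u 2 ∈ Ut := by simpa using hu 2 (by omega)
    obtain ⟨a', ha', hEa'⟩ := hs q a (u 1) hq hu1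
    obtain ⟨b', hb', hEb'⟩ := ht q a (u 2) hq hu2
    obtain ⟨c, hc⟩ := Option.isSome_iff_exists.mp (pc2_pair_isSome P hu0 a' b')
    refine ⟨c, key a c ?_, a', b', hEa', hEb', ⟨u 0, hu0, hc⟩⟩
    have hv : (fun i : Fin 4 => if (i : ℕ) < 3 then u i else a) = ![u 0, u 1, u 2, a] := by
      funext i; fin_cases i <;> simp
    rw [hv, eval_liftTerm P.app (u 0) (u 1) (u 2) a a' b' ha' hb']
    exact hc⟩

def asmPbCone {X Y Z : Asm P} (f : X ⟶ Z) (g : Y ⟶ Z) : PullbackCone f g :=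
  PullbackCone.mk (asmPbFst f g) (asmPbSnd f g) (asm_hom_ext fun p => p.2)

def asmPbIsLimit {X Y Z : Asm P} (f : X ⟶ Z) (g : Y ⟶ Z) : IsLimit (asmPbCone f g) :=
  PullbackCone.IsLimit.mk _
    (fun s => asmPbLift f g s.fst s.snd (fun q => asm_hom_congr s.condition q))
    (fun s => asm_hom_ext fun _ => rfl)
    (fun s => asm_hom_ext fun _ => rfl)
    (fun s m hm1 hm2 => asm_hom_ext fun q =>
      Subtype.ext (Prod.ext (asm_hom_congr hm1 q) (asm_hom_congr hm2 q)))

instance asmHasTerminal (P : PCA A) : HasTerminal (Asm P) :=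
  (asmTerminalIsTerminal P).hasTerminal

instance asmHasLimitCospan {X Y Z : Asm P} (f : X ⟶ Z) (g : Y ⟶ Z) :
    HasLimit (cospan f g) :=
  HasLimit.mk ⟨asmPbCone f g, asmPbIsLimit f g⟩

instance asmHasPullbacks (P : PCA A) : HasPullbacks (Asm P) :=
  hasPullbacks_of_hasLimit_cospan _

instance asmHasFiniteLimits (P : PCA A) : HasFiniteLimits (Asm P) :=
  hasFiniteLimits_of_hasTerminal_and_pullbacks

end Assemblies

/- ### Regular epimorphisms of assemblies -/

section RegEpi

open Limits

variable {A : Type} {P : PCA A}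

/-- `e` is a covering morphism of assemblies. -/
def Covers {X Y : Asm P} (e : X ⟶ Y) : Prop :=
  Function.Surjective e.1 ∧ ∃ U ∈ P.filt, ∀ y b, Y.E y b → ∀ r ∈ U,
    ∃ c, P.app r b = some c ∧ ∃ x, e.1 x = y ∧ X.E x c

lemma surjective_of_epi {X Y : Asm P} (e : X ⟶ Y) [Epi e] : Function.Surjective e.1 := by
  let χ1 : Y ⟶ nablaObj P Prop := idTracked (fun y => ∃ x, e.1 x = y) (fun _ _ _ => trivial)
  let χ2 : Y ⟶ nablaObj P Prop := idTracked (fun _ => True) (fun _ _ _ => trivial)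
  have h : e ≫ χ1 = e ≫ χ2 := asm_hom_ext fun x => eq_true ⟨x, rfl⟩
  have h2 := (cancel_epi e).mp h
  intro y
  have hy : (∃ x, e.1 x = y) = True := asm_hom_congr h2 y
  exact cast hy.symm trivial

/-- The composition term `λ v u b. v (u b)`. -/
def compTerm : Term 3 := Term.op (.var 0) (.op (.var 1) (.var 2))

lemma exists_comp_tracker (P : PCA A) {U V : Set A} (hU : U ∈ P.filt) (hV : V ∈ P.filt) :
    ∃ W ∈ P.filt, ∀ w ∈ W, ∃ u v, u ∈ U ∧ v ∈ V ∧
      ∀ x y c, P.app v x = some y → P.app u y = some c → P.app w x = some c := by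
  obtain ⟨W, hW, hkey⟩ := exists_trackerN P 2 compTerm (fun i => if i = 0 then U else V)
    (by intro i hi; interval_cases i <;> simp [hU, hV])
  refine ⟨W, hW, fun w hw => ?_⟩
  obtain ⟨u, hu, key⟩ := hkey w hw
  refine ⟨u 0, u 1, by simpa using hu 0 (by omega), by simpa using hu 1 (by omega), ?_⟩
  intro x y c h1 h2
  refine key x c ?_
  have hv : (fun i : Fin 3 => if (i : ℕ) < 2 then u i else x) = ![u 0, u 1, x] := by
    funext i; fin_cases i <;> simp
  rw [hv]
  simp [compTerm, Term.eval, h1, h2]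

/-- The coequalizer factorization of a covering morphism. -/
noncomputable def coversDesc {X Y : Asm P} (e : X ⟶ Y) (hc : Covers e)
    (s : Cofork (asmPbFst e e) (asmPbSnd e e)) : Y ⟶ s.pt := by
  have key : ∀ x x', e.1 x = e.1 x' → s.π.1 x = s.π.1 x' := fun x x' hxx =>
    asm_hom_congr (Cofork.condition s) (⟨(x, x'), hxx⟩ : (asmPb e e).carrier)
  refine ⟨fun y => s.π.1 (Classical.choose (hc.1 y)), ?_⟩
  obtain ⟨Us, hUs, hs⟩ := s.π.2
  obtain ⟨Uc, hUc, hcov⟩ := hc.2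
  obtain ⟨W, hW, hkey⟩ := exists_comp_tracker P hUs hUc
  refine ⟨W, hW, fun y b w hy hw => ?_⟩
  obtain ⟨u, v, hu, hv, kw⟩ := hkey w hw
  obtain ⟨c, hcc, x, hx, hxc⟩ := hcov y b hy v hv
  obtain ⟨d, hd, hEd⟩ := hs x c u hxc hu
  refine ⟨d, kw b c d hcc hd, ?_⟩
  have hkey2 : s.π.1 x = s.π.1 (Classical.choose (hc.1 y)) :=
    key _ _ (hx.trans (Classical.choose_spec (hc.1 y)).symm)
  show s.pt.E (s.π.1 (Classical.choose (hc.1 y))) d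
  rw [← hkey2]
  exact hEd

/-- A covering morphism of assemblies is a regular epimorphism. -/
noncomputable def regularEpiOfCovers {X Y : Asm P} (e : X ⟶ Y) (hc : Covers e) :
    RegularEpi e where
  W := asmPb e e
  left := asmPbFst e e
  right := asmPbSnd e e
  w := asm_hom_ext fun p => p.2
  isColimit := by
    have key : ∀ (s : Cofork (asmPbFst e e) (asmPbSnd e e)) (x x' : X.carrier),
        e.1 x = e.1 x' → s.π.1 x = s.π.1 x' := fun s x x' hxx =>
      asm_hom_congr (Cofork.condition s) (⟨(x, x'), hxx⟩ : (asmPb e e).carrier)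
    refine Cofork.IsColimit.mk _ (coversDesc e hc) (fun s => asm_hom_ext fun x => ?_)
      (fun s m hm => asm_hom_ext fun y => ?_)
    · exact (key s _ _ (Classical.choose_spec (hc.1 (e.1 x)))).symm ▸
        key s (Classical.choose (hc.1 (e.1 x))) x (Classical.choose_spec (hc.1 (e.1 x)))
    · obtain ⟨x, rfl⟩ := hc.1 y
      exact (asm_hom_congr hm x).trans
        (key s x (Classical.choose (hc.1 (e.1 x))) (Classical.choose_spec (hc.1 (e.1 x))).symm)

lemma covers_of_regularEpi {X Y : Asm P} (e : X ⟶ Y) (inst : RegularEpi e) : Covers e := by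
  haveI := RegularEpi.epi e inst
  have hsurj : Function.Surjective e.1 := surjective_of_epi e
  refine ⟨hsurj, ?_⟩
  let Z' : Asm P := ⟨Y.carrier, fun y c => ∃ x, e.1 x = y ∧ X.E x c, fun y => by
    obtain ⟨x, rfl⟩ := hsurj y
    obtain ⟨a, ha⟩ := X.total x
    exact ⟨a, x, rfl, ha⟩⟩
  let e' : X ⟶ Z' := idTracked e.1 (fun x a hx => ⟨x, rfl, hx⟩)
  have hcoeq : (inst.left : inst.W ⟶ X) ≫ e' = inst.right ≫ e' :=
    asm_hom_ext fun w => asm_hom_congr inst.w w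
  obtain ⟨t, ht⟩ := inst.desc' e' hcoeq
  obtain ⟨U, hU, htr⟩ := t.2
  refine ⟨U, hU, fun y b hy r hr => ?_⟩
  obtain ⟨c, hcc, hZ⟩ := htr y b r hy hr
  have hty : t.1 y = y := by
    obtain ⟨x, rfl⟩ := hsurj y
    exact asm_hom_congr ht x
  rw [hty] at hZ
  exact ⟨c, hcc, hZ⟩

/-- The image assembly of a morphism. -/
def asmImage {X Y : Asm P} (f : X ⟶ Y) : Asm P :=
  ⟨{y : Y.carrier // ∃ x, f.1 x = y}, fun z c => ∃ x, f.1 x = z.1 ∧ X.E x c,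
   fun z => by
    obtain ⟨x, hx⟩ := z.2
    obtain ⟨a, ha⟩ := X.total x
    exact ⟨a, x, hx, ha⟩⟩

def asmImageE {X Y : Asm P} (f : X ⟶ Y) : X ⟶ asmImage f :=
  idTracked (fun x => ⟨f.1 x, x, rfl⟩) (fun x _ hx => ⟨x, rfl, hx⟩)

def asmImageM {X Y : Asm P} (f : X ⟶ Y) : asmImage f ⟶ Y :=
  ⟨fun z => z.1, by
    obtain ⟨U, hU, hf⟩ := f.2
    refine ⟨U, hU, fun z c r hz hr => ?_⟩
    obtain ⟨x, hx, hxc⟩ := hz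
    obtain ⟨b, hb, hY⟩ := hf x c r hxc hr
    refine ⟨b, hb, ?_⟩
    show Y.E z.1 b
    rw [← hx]
    exact hY⟩

lemma asmImageE_covers {X Y : Asm P} (f : X ⟶ Y) : Covers (asmImageE f) := by
  constructor
  · intro z
    obtain ⟨x, hx⟩ := z.2
    exact ⟨x, Subtype.ext hx⟩
  · obtain ⟨U, hU, hI⟩ := exists_ireal P
    refine ⟨U, hU, fun z c hz r hr => ?_⟩
    obtain ⟨x, hx, hxc⟩ := hz
    exact ⟨c, hI r hr c, x, Subtype.ext hx, hxc⟩

lemma mono_of_injective {X Y : Asm P} (m : X ⟶ Y) (hm : Function.Injective m.1) : Mono m :=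
  ⟨fun u v huv => asm_hom_ext fun x => hm (asm_hom_congr huv x)⟩

/-- The term `λ p u v a. p a (v (u a))`. -/
def pbCovTerm : Term 4 :=
  Term.op (.op (.var 0) (.var 3)) (.op (.var 2) (.op (.var 1) (.var 3)))

lemma eval_pbCovTerm (app : PApp A) (p u v a b c : A)
    (h1 : app u a = some b) (h2 : app v b = some c) :
    Term.eval app pbCovTerm ![p, u, v, a] = pc2 app p a c := by
  simp [pbCovTerm, Term.eval, h1, h2, pc2]

lemma covers_pbFst {X Y Z : Asm P} (f : X ⟶ Z) (g : Y ⟶ Z) (hg : Covers g) :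
    Covers (asmPbFst f g) := by
  obtain ⟨gsurj, Ug, hUg, hgcov⟩ := hg
  constructor
  · intro x
    obtain ⟨y, hy⟩ := gsurj (f.1 x)
    exact ⟨⟨(x, y), hy.symm⟩, rfl⟩
  · obtain ⟨Uf, hUf, hf⟩ := f.2
    obtain ⟨W, hW, hkey⟩ := exists_trackerN P 3 pbCovTerm
      (fun i => if i = 0 then pairSet P else if i = 1 then Uf else Ug)
      (by intro i hi; interval_cases i <;> simp [pairSet_mem P, hUf, hUg])
    refine ⟨W, hW, fun x a hx w hw => ?_⟩
    obtain ⟨u, hu, key⟩ := hkey w hw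
    have hu0 : u 0 ∈ pairSet P := by simpa using hu 0 (by omega)
    have hu1 : u 1 ∈ Uf := by simpa using hu 1 (by omega)
    have hu2 : u 2 ∈ Ug := by simpa using hu 2 (by omega)
    obtain ⟨b, hb, hZb⟩ := hf x a (u 1) hx hu1
    obtain ⟨c', hc', y, hy, hYc⟩ := hgcov (f.1 x) b hZb (u 2) hu2
    obtain ⟨d, hd⟩ := Option.isSome_iff_exists.mp (pc2_pair_isSome P hu0 a c')
    refine ⟨d, key a d ?_, ⟨(x, y), hy.symm⟩, rfl, a, c', hx, hYc, u 0, hu0, hd⟩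
    have hv : (fun i : Fin 4 => if (i : ℕ) < 3 then u i else a) = ![u 0, u 1, u 2, a] := by
      funext i; fin_cases i <;> simp
    rw [hv, eval_pbCovTerm P.app (u 0) (u 1) (u 2) a b c' hb hc']
    exact hd

lemma covers_comp_iso {W' Pb X : Asm P} (i : W' ≅ Pb) (p : Pb ⟶ X) (hp : Covers p) :
    Covers (i.hom ≫ p) := by
  obtain ⟨psurj, U, hU, hcov⟩ := hp
  have hih : ∀ q, (i.hom ≫ p).1 (i.inv.1 q) = p.1 q := fun q => by
    have h : (i.inv ≫ i.hom ≫ p) = p := Iso.inv_hom_id_assoc i p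
    exact asm_hom_congr h q
  constructor
  · intro x
    obtain ⟨q, hq⟩ := psurj x
    exact ⟨i.inv.1 q, (hih q).trans hq⟩
  · obtain ⟨V, hV, hinv⟩ := i.inv.2
    obtain ⟨W, hW, hkey⟩ := exists_comp_tracker P hV hU
    refine ⟨W, hW, fun x a hx w hw => ?_⟩
    obtain ⟨u, v, hu, hv, kw⟩ := hkey w hw
    obtain ⟨c, hc, q, hq, hqc⟩ := hcov x a hx v hv
    obtain ⟨d, hd, hEd⟩ := hinv q c u hqc hu
    exact ⟨d, kw a c d hc hd, i.inv.1 q, (hih q).trans hq, hEd⟩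

lemma regularEpi_pb_stable {W X Y Z : Asm P} (fst : W ⟶ X) (snd : W ⟶ Y) (f : X ⟶ Z)
    (g : Y ⟶ Z) (hpb : IsPullback fst snd f g) (hg : RegularEpi g) :
    Nonempty (RegularEpi fst) := by
  haveI := hg
  have hgcov : Covers g := covers_of_regularEpi g hg
  let i : W ≅ (asmPbCone f g).pt := hpb.isLimit.conePointUniqueUpToIso (asmPbIsLimit f g)
  have hi : i.hom ≫ asmPbFst f g = fst := by
    have h := IsLimit.conePointUniqueUpToIso_hom_comp hpb.isLimit (asmPbIsLimit f g)
      WalkingCospan.left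
    simp [asmPbCone] at h
    exact h
  have hcv : Covers fst := by
    rw [← hi]
    exact covers_comp_iso i _ (covers_pbFst f g hgcov)
  exact ⟨regularEpiOfCovers fst hcv⟩

end RegEpi

/- ### Preservation properties of Γ and ∇ -/

section Preservation

open Limits

variable {A : Type}

/-- The adjunction `Γ ⊣ ∇`. -/
def gamNabAdj (P : PCA A) : Gam P ⊣ Nab P :=
  Adjunction.mkOfHomEquiv
    { homEquiv := fun X S =>
        { toFun := fun g => idTracked (fun x => g x) (fun _ _ _ => trivial)
          invFun := fun h => TypeCat.ofHom h.1
          left_inv := fun _ => rfl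
          right_inv := fun _ => Subtype.ext rfl }
      homEquiv_naturality_left_symm := fun _ _ => rfl
      homEquiv_naturality_right := fun _ _ => Subtype.ext rfl }

lemma nabPreservesFiniteLimits (P : PCA A) : PreservesFiniteLimits (Nab P) := by
  haveI : PreservesLimitsOfSize.{0, 0} (Nab P) := (gamNabAdj P).rightAdjoint_preservesLimits
  infer_instance

def typePbIsLimit {P : PCA A} {X Y Z : Asm P} (f : X ⟶ Z) (g : Y ⟶ Z) :
    IsLimit (PullbackCone.mk ((Gam P).map (asmPbFst f g)) ((Gam P).map (asmPbSnd f g))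
      (ConcreteCategory.hom_ext _ _ fun p => p.2) : PullbackCone ((Gam P).map f) ((Gam P).map g)) :=
  PullbackCone.IsLimit.mk _
    (fun s => TypeCat.ofHom fun q => ⟨(s.fst q, s.snd q), types_congr_hom s.condition q⟩)
    (fun _ => rfl) (fun _ => rfl)
    (fun s m hm1 hm2 => ConcreteCategory.hom_ext _ _ fun q =>
      Subtype.ext (Prod.ext (types_congr_hom hm1 q) (types_congr_hom hm2 q)))

lemma gamPreservesFiniteLimits (P : PCA A) : PreservesFiniteLimits (Gam P) := by
  haveI h1 : PreservesLimit (Functor.empty.{0} (Asm P)) (Gam P) := by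
    apply preservesTerminal_of_iso
    exact (Gam P).mapIso (terminalIsTerminal.uniqueUpToIso (asmTerminalIsTerminal P)) ≪≫
      Types.terminalIso.symm
  haveI h2 := preservesLimitsOfShape_pempty_of_preservesTerminal (Gam P)
  haveI h3 : ∀ {X Y Z : Asm P} (f : X ⟶ Z) (g : Y ⟶ Z),
      PreservesLimit (cospan f g) (Gam P) := by
    intro X Y Z f g
    apply preservesLimit_of_preserves_limit_cone (asmPbIsLimit f g)
    exact (isLimitMapConePullbackConeEquiv (Gam P) _).symm (typePbIsLimit f g)
  haveI : PreservesLimitsOfShape WalkingCospan (Gam P) :=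
    ⟨fun {K} => preservesLimit_of_iso_diagram _ (diagramIsoCospan K).symm⟩
  exact preservesFiniteLimits_of_preservesTerminal_and_pullbacks (Gam P)

lemma gamMapRegularEpi {P : PCA A} {X Y : Asm P} (e : X ⟶ Y) (he : RegularEpi e) :
    Nonempty (RegularEpi ((Gam P).map e)) := by
  haveI := RegularEpi.epi e he
  have hsurj : Function.Surjective e.1 := surjective_of_epi e
  haveI : IsSplitEpi ((Gam P).map e) := IsSplitEpi.mk'
    ⟨TypeCat.ofHom (Function.surjInv hsurj),
      ConcreteCategory.hom_ext _ _ fun y => Function.rightInverse_surjInv hsurj y⟩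
  exact ⟨RegularEpi.ofSplitEpi _⟩

lemma nabMapRegularEpi (P : PCA A) {X Y : Type} (e : X ⟶ Y) (he : RegularEpi e) :
    Nonempty (RegularEpi ((Nab P).map e)) := by
  haveI := RegularEpi.epi e he
  have hsurj : Function.Surjective e := (epi_iff_surjective e).mp inferInstance
  refine ⟨regularEpiOfCovers _ ⟨hsurj, ?_⟩⟩
  obtain ⟨U, hU, hI⟩ := exists_ireal P
  refine ⟨U, hU, fun y b _ r hr => ?_⟩
  obtain ⟨x, hx⟩ := hsurj y
  exact ⟨b, hI r hr b, x, hx, trivial⟩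

end Preservation

/-- `Asm(A,φ)` is a regular category: it has finite limits, every morphism
factors as a regular epimorphism followed by a monomorphism, and regular epimorphisms are
stable under pullback; moreover `Γ` and `∇` preserve finite limits and regular epimorphisms. -/
theorem statement8 (A : Type) (P : PCA A) :
    Limits.HasFiniteLimits (Asm P) ∧
    (∀ (X Y : Asm P) (f : X ⟶ Y), ∃ (Z : Asm P) (e : X ⟶ Z) (m : Z ⟶ Y),
        Nonempty (RegularEpi e) ∧ Mono m ∧ e ≫ m = f) ∧
    (∀ (W X Y Z : Asm P) (fst : W ⟶ X) (snd : W ⟶ Y) (f : X ⟶ Z) (g : Y ⟶ Z),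
        IsPullback fst snd f g → Nonempty (RegularEpi g) → Nonempty (RegularEpi fst)) ∧
    Nonempty (Limits.PreservesFiniteLimits (Gam P)) ∧
    (∀ (X Y : Asm P) (e : X ⟶ Y), Nonempty (RegularEpi e) →
        Nonempty (RegularEpi ((Gam P).map e))) ∧
    Nonempty (Limits.PreservesFiniteLimits (Nab P)) ∧
    (∀ (X Y : Type) (e : X ⟶ Y), Nonempty (RegularEpi e) →
        Nonempty (RegularEpi ((Nab P).map e))) := by
  refine ⟨inferInstance, ?_, ?_, ⟨gamPreservesFiniteLimits P⟩, ?_,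
    ⟨nabPreservesFiniteLimits P⟩, ?_⟩
  · intro X Y f
    exact ⟨asmImage f, asmImageE f, asmImageM f,
      ⟨regularEpiOfCovers _ (asmImageE_covers f)⟩,
      mono_of_injective _ (fun z z' h => Subtype.ext h),
      asm_hom_ext fun x => rfl⟩
  · rintro W X Y Z fst snd f g hpb ⟨hg⟩
    exact regularEpi_pb_stable fst snd f g hpb hg
  · rintro X Y e ⟨he⟩
    exact gamMapRegularEpi e he
  · rintro X Y e ⟨he⟩
    exact nabMapRegularEpi P e he

end PcaPaper
end

section
/- Let (A,φ) be a PCA over Set and let e: X → Y be a morphism in Asm(A,φ). Then e is a regular epimorphism in Asm(A,φ) if and only if there exists U ∈ φ witnessing this, namely: for all y ∈ |Y|, a ∈ A with E_Y(y,a), and r ∈ U, the product ra is defined and there exists x ∈ |X| with e(x) = y and E_X(x, ra). -/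
open CategoryTheory

namespace PcaPaper

variable {A B C : Type}

/- ### Helper lemmas for Statement 9 -/

lemma appVec_one_pre' (app : PApp A) (r a b : A) :
    appVec app r 1 (fun i => (![a, b] : Fin 2 → A) i.castSucc) = app r a := rfl

lemma appVec_two_full (app : PApp A) (r a b : A) :
    appVec app r (1 + 1) ![a, b] = (app r a).bind fun s => app s b := rfl

lemma exists_kreal (P : PCA A) :
    ∃ K ∈ P.filt, ∀ k ∈ K, ∀ a b : A, ∃ m, P.app k a = some m ∧ P.app m b = some a := by
  obtain ⟨K, hK, hreal⟩ := P.complete 1 (.var 0)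
  refine ⟨K, hK, fun k hk a b => ?_⟩
  have h1 := (hreal k hk ![a, b]).1
  rw [appVec_one_pre'] at h1
  obtain ⟨m, hm⟩ := Option.isSome_iff_exists.mp h1
  have h2 := (hreal k hk ![a, b]).2 a (by simp [Term.eval])
  rw [appVec_two_full, hm] at h2
  simp only [Option.bind_some] at h2
  exact ⟨m, hm, h2⟩

lemma exists_kreal' (P : PCA A) :
    ∃ K ∈ P.filt, ∀ k ∈ K, ∀ a b : A, ∃ m, P.app k a = some m ∧ P.app m b = some b := by
  obtain ⟨K, hK, hreal⟩ := P.complete 1 (.var 1)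
  refine ⟨K, hK, fun k hk a b => ?_⟩
  have h1 := (hreal k hk ![a, b]).1
  rw [appVec_one_pre'] at h1
  obtain ⟨m, hm⟩ := Option.isSome_iff_exists.mp h1
  have h2 := (hreal k hk ![a, b]).2 b (by simp [Term.eval])
  rw [appVec_two_full, hm] at h2
  simp only [Option.bind_some] at h2
  exact ⟨m, hm, h2⟩

lemma eval_pairT (app : PApp A) (a b c : A) :
    Term.eval app (Term.op (.op (.var 2) (.var 0)) (.var 1)) ![a, b, c]
      = (app c a).bind fun m => app m b := by
  simp [Term.eval]

lemma eval_appfst (app : PApp A) (u v x : A) :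
    Term.eval app (Term.op (.var 2) (.var 0)) ![u, v, x] = app x u := by
  simp [Term.eval]

lemma pair_apply (P : PCA A) {T : Set A}
    (hreal : Realizes P.app T (Term.op (.op (.var 2) (.var 0)) (.var 1) : Term (2 + 1)))
    {r a a' s d : A} (hr : r ∈ T) (hs : P.app r a = some s) (hd : P.app s a' = some d)
    {c b : A}
    (hc : Term.eval P.app (Term.op (.op (.var 2) (.var 0)) (.var 1) : Term (2 + 1)) ![a, a', c] = some b) :
    P.app d c = some b := by
  have h := (hreal r hr ![a, a', c]).2 b hc
  rw [appVec_three_cons, hs] at h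
  simp only [Option.bind_some] at h
  rw [hd] at h
  simpa using h

/-- A morphism `e : X → Y` in `Asm(A,φ)` is a regular epimorphism iff there
is a witness `U ∈ φ`: for all `y`, `a` with `E_Y(y,a)` and all `r ∈ U`, `ra` is defined and
there is `x ∈ |X|` with `e(x) = y` and `E_X(x, ra)`. -/
theorem statement9 (A : Type) (P : PCA A) (X Y : Asm P) (e : X ⟶ Y) :
    Nonempty (RegularEpi e) ↔
      ∃ U ∈ P.filt, ∀ y a, Y.E y a → ∀ r ∈ U,
        ∃ b, P.app r a = some b ∧ ∃ x, e.1 x = y ∧ X.E x b := by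
  constructor
  · rintro ⟨re⟩
    haveI : RegularEpi e := re
    obtain ⟨I, hI, hid⟩ := exists_ireal P
    have htrv : ∀ g : Y.carrier → Prop,
        ∃ U ∈ P.filt, Tracks P (X := Y) (Y := nablaObj P Prop) U g :=
      fun g => ⟨I, hI, fun y a r hy hr => ⟨a, hid r hr a, trivial⟩⟩
    let u : Y ⟶ nablaObj P Prop := ⟨fun y => ∃ x, e.1 x = y, htrv _⟩
    let v : Y ⟶ nablaObj P Prop := ⟨fun _ => True, htrv _⟩
    have hue : e ≫ u = e ≫ v := Subtype.ext (funext fun x => eq_true ⟨x, rfl⟩)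
    have huv : u = v := (RegularEpi.epi e re).left_cancellation _ _ hue
    have hsurj : ∀ y, ∃ x, e.1 x = y := by
      intro y
      have h := congrFun (congrArg Subtype.val huv) y
      exact of_eq_true h
    let Y' : Asm P :=
      { carrier := Y.carrier
        E := fun y b => ∃ x, e.1 x = y ∧ X.E x b
        total := fun y => by
          obtain ⟨x, hx⟩ := hsurj y
          obtain ⟨a, ha⟩ := X.total x
          exact ⟨a, x, hx, ha⟩ }
    let q : X ⟶ Y' := ⟨e.1, I, hI, fun x a r hx hr => ⟨a, hid r hr a, x, rfl, hx⟩⟩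
    have hq : re.left ≫ q = re.right ≫ q := by
      apply Subtype.ext
      funext w
      exact congrFun (congrArg Subtype.val re.w) w
    let m : Y ⟶ Y' := re.isColimit.desc (Limits.Cofork.ofπ q hq)
    have hm : e ≫ m = q := by
      have h := Limits.Cofork.IsColimit.π_desc (s := Limits.Cofork.ofπ e re.w)
        (t := Limits.Cofork.ofπ q hq) re.isColimit
      simpa using h
    obtain ⟨V, hV, htrm⟩ := m.2
    refine ⟨V, hV, fun y a hy r hr => ?_⟩
    obtain ⟨b, hb, hE⟩ := htrm y a r hy hr
    obtain ⟨x0, hx0⟩ := hsurj y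
    have hmy : m.1 y = y := by
      rw [← hx0]
      exact congrFun (congrArg Subtype.val hm) x0
    rw [hmy] at hE
    exact ⟨b, hb, hE⟩
  · rintro ⟨U, hU, hwit⟩
    obtain ⟨Pt, hPt, hPreal⟩ := P.complete 2 (.op (.op (.var 2) (.var 0)) (.var 1))
    obtain ⟨K, hK, hkl⟩ := exists_kreal P
    obtain ⟨K', hK', hkr⟩ := exists_kreal' P
    let Wasm : Asm P :=
      { carrier := {p : X.carrier × X.carrier // e.1 p.1 = e.1 p.2}
        E := fun p d => ∃ a a' r s, X.E p.1.1 a ∧ X.E p.1.2 a' ∧ r ∈ Pt ∧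
          P.app r a = some s ∧ P.app s a' = some d
        total := fun p => by
          obtain ⟨a, ha⟩ := X.total p.1.1
          obtain ⟨a', ha'⟩ := X.total p.1.2
          obtain ⟨r, hr⟩ := P.isFilter.nonempty Pt hPt
          obtain ⟨s, d, hs, hd⟩ := realizes3_chain P hPreal hr a a'
          exact ⟨d, a, a', r, s, ha, ha', hr, hs, hd⟩ }
    obtain ⟨F, hF, hFkey⟩ := exists_tracker3 P (.op (.var 2) (.var 0)) hK hK
    obtain ⟨G, hG, hGkey⟩ := exists_tracker3 P (.op (.var 2) (.var 0)) hK' hK'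
    have fst_tracks : Tracks P (X := Wasm) (Y := X) F (fun p => p.1.1) := by
      rintro p d f ⟨a, a', r, s, ha, ha', hr, hs, hd⟩ hf
      obtain ⟨uu, hu, vv, hv, key⟩ := hFkey f hf
      obtain ⟨mm, hm1, hm2⟩ := hkl uu hu a a'
      have hdu : P.app d uu = some a := by
        refine pair_apply P hPreal hr hs hd ?_
        rw [eval_pairT, hm1]
        simpa using hm2
      refine ⟨a, key d a ?_, ha⟩
      rw [eval_appfst]
      exact hdu
    have snd_tracks : Tracks P (X := Wasm) (Y := X) G (fun p => p.1.2) := by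
      rintro p d f ⟨a, a', r, s, ha, ha', hr, hs, hd⟩ hf
      obtain ⟨uu, hu, vv, hv, key⟩ := hGkey f hf
      obtain ⟨mm, hm1, hm2⟩ := hkr uu hu a a'
      have hdu : P.app d uu = some a' := by
        refine pair_apply P hPreal hr hs hd ?_
        rw [eval_pairT, hm1]
        simpa using hm2
      refine ⟨a', key d a' ?_, ha'⟩
      rw [eval_appfst]
      exact hdu
    let fst : Wasm ⟶ X := ⟨fun p => p.1.1, F, hF, fst_tracks⟩
    let snd : Wasm ⟶ X := ⟨fun p => p.1.2, G, hG, snd_tracks⟩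
    have hw : fst ≫ e = snd ≫ e := Subtype.ext (funext fun p => p.2)
    have hsurj : ∀ y, ∃ x, e.1 x = y := by
      intro y
      obtain ⟨a, ha⟩ := Y.total y
      obtain ⟨r, hr⟩ := P.isFilter.nonempty U hU
      obtain ⟨b, -, x, hx, -⟩ := hwit y a ha r hr
      exact ⟨x, hx⟩
    choose sec hsec using hsurj
    have hcond : ∀ (s : Limits.Cofork fst snd) (x x' : X.carrier),
        e.1 x = e.1 x' → s.π.1 x = s.π.1 x' := by
      intro s x x' hxx
      exact congrFun (congrArg Subtype.val s.condition)
        (⟨(x, x'), hxx⟩ : Wasm.carrier)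
    have colim : Limits.IsColimit (Limits.Cofork.ofπ e hw) := by
      refine Limits.Cofork.IsColimit.mk _ (fun s => ⟨fun y => s.π.1 (sec y), ?_⟩)
        (fun s => ?_) (fun s m hm => ?_)
      · obtain ⟨Vg, hVg, htr⟩ := s.π.2
        obtain ⟨T, hT, keyT⟩ := exists_tracker3 P
          (.op (.var 1) (.op (.var 0) (.var 2))) hU hVg
        refine ⟨T, hT, fun y a w hy hw' => ?_⟩
        obtain ⟨uu, huu, vv, hvv, key⟩ := keyT w hw'
        obtain ⟨b, hub, x, hex, hxb⟩ := hwit y a hy uu huu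
        obtain ⟨c, hvb, hZc⟩ := htr x b vv hxb hvv
        refine ⟨c, key a c ?_, ?_⟩
        · rw [eval_comp_term, hub]
          simpa using hvb
        · have hcon : s.π.1 (sec y) = s.π.1 x :=
            hcond s _ _ (by rw [hsec, hex])
          show s.pt.E (s.π.1 (sec y)) c
          rw [hcon]
          exact hZc
      · refine Subtype.ext (funext fun x => ?_)
        exact hcond s _ _ (hsec (e.1 x))
      · refine Subtype.ext (funext fun y => ?_)
        have h1 : m.1 (e.1 (sec y)) = s.π.1 (sec y) :=
          congrFun (congrArg Subtype.val hm) (sec y)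
        calc m.1 y = m.1 (e.1 (sec y)) := by rw [hsec]
          _ = s.π.1 (sec y) := h1
    exact ⟨{ W := Wasm, left := fst, right := snd, w := hw, isColimit := colim }⟩

end PcaPaper
end
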